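/- Let k be a field of characteristic zero, L a finitely generated field extension of k, and x₁,…,xₙ ∈ L elements such that the differentials d(x₁),…,d(xₙ) form an L-basis of the module of Kähler differentials Ω_{L/k}. Then x₁,…,xₙ are algebraically independent over k and the extension k(x₁,…,xₙ) ⊆ L is finite. -/

import Mathlib

open MvPolynomial

/-- Chain rule: applying a derivation to a polynomial expression. -/
lemma deriv_aeval_eq {k L M : Type*} [CommRing k] [CommRing L] [Algebra k L]
    [AddCommGroup M] [Module k M] [Module L M] [IsScalarTower k L M]
    (D : Derivation k L M) {n : ℕ} (x : Fin n → L) (p : MvPolynomial (Fin n) k) :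
    D (aeval x p) = ∑ i, aeval x (pderiv i p) • D (x i) := by
  induction p using MvPolynomial.induction_on with
  | C a => simp
  | add p q hp hq => simp [hp, hq, add_smul, Finset.sum_add_distrib]
  | mul_X p i hp =>
    classical
    have h2 : ∑ j, ((aeval x) p * (aeval x) ((pderiv j) (X i : MvPolynomial (Fin n) k))) • D (x j)
        = (aeval x) p • D (x i) := by
      rw [Finset.sum_eq_single i]
      · simp
      · intro j _ hj
        rw [pderiv_X_of_ne (Ne.symm hj)]
        simp
      · simp
    have h1 : ∑ j, ((aeval x) ((pderiv j) p) * (aeval x) (X i : MvPolynomial (Fin n) k)) • D (x j)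
        = x i • D ((aeval x) p) := by
      rw [hp, Finset.smul_sum]
      exact Finset.sum_congr rfl fun j _ => by rw [aeval_X, smul_smul, mul_comm]
    conv_rhs => simp only [pderiv_mul, map_add, add_smul, Finset.sum_add_distrib, map_mul]
    rw [h1, h2, map_mul, aeval_X, D.leibniz, add_comm]

lemma coeff_pderiv' {k : Type*} [CommRing k] {n : ℕ} (i : Fin n) (p : MvPolynomial (Fin n) k)
    (m : Fin n →₀ ℕ) :
    (pderiv i p).coeff m = (m i + 1 : ℕ) * p.coeff (m + Finsupp.single i 1) := by
  classical
  induction p using MvPolynomial.induction_on' with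
  | add p q hp hq => simp [hp, hq, mul_add]
  | monomial s a =>
    rw [pderiv_monomial, coeff_monomial, coeff_monomial]
    by_cases h : s = m + Finsupp.single i 1
    · subst h
      rw [if_pos, if_pos rfl]
      · push_cast
        simp [mul_comm]
      · ext j
        by_cases hj : j = i <;> simp [hj]
    · rw [if_neg h, mul_zero]
      by_cases h2 : m = s - Finsupp.single i 1
      · rw [if_pos h2.symm]
        subst h2
        have hsi : s i = 0 := by
          by_contra hsi
          have hle : Finsupp.single i 1 ≤ s := by
            rwa [Finsupp.single_le_iff, Nat.one_le_iff_ne_zero]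
          exact h (tsub_add_cancel_of_le hle).symm
        simp [hsi]
      · rw [if_neg fun hh => h2 hh.symm]

lemma eq_C_of_pderiv_eq_zero {k : Type*} [Field k] [CharZero k] {n : ℕ}
    {p : MvPolynomial (Fin n) k} (h : ∀ i, pderiv i p = 0) :
    p = C (constantCoeff p) := by
  ext m
  by_cases hm : m = 0
  · subst hm; simp [constantCoeff_eq]
  · have : ∃ i, m i ≠ 0 := by
      by_contra hc
      push_neg at hc
      exact hm (Finsupp.ext fun i => hc i)
    obtain ⟨i, hi⟩ := this
    have hle : Finsupp.single i 1 ≤ m := by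
      rwa [Finsupp.single_le_iff, Nat.one_le_iff_ne_zero]
    set m' : Fin n →₀ ℕ := m - Finsupp.single i 1 with hm'
    have := coeff_pderiv' i p m'
    rw [h i, hm', tsub_add_cancel_of_le hle] at this
    have hne : ((m' i + 1 : ℕ) : k) ≠ 0 := by exact_mod_cast not_false
    have : p.coeff m = 0 := by
      have h0 : (0 : MvPolynomial (Fin n) k).coeff m' = 0 := by simp
      rw [h0] at this
      exact (mul_eq_zero.mp this.symm).resolve_left hne
    rw [this, coeff_C, if_neg fun hh => hm hh.symm]

lemma totalDegree_pderiv_lt {k : Type*} [Field k] {n : ℕ} (i : Fin n)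
    {p : MvPolynomial (Fin n) k} (h : pderiv i p ≠ 0) :
    (pderiv i p).totalDegree < p.totalDegree := by
  have key : ∀ m ∈ (pderiv i p).support, m.sum (fun _ e => e) + 1 ≤ p.totalDegree := by
    intro m hm
    rw [mem_support_iff, coeff_pderiv' i p m] at hm
    have hc : p.coeff (m + Finsupp.single i 1) ≠ 0 := right_ne_zero_of_mul hm
    have hsup : (m + Finsupp.single i 1) ∈ p.support := mem_support_iff.mpr hc
    have := le_totalDegree hsup
    rwa [Finsupp.sum_add_index' (fun _ => rfl) (fun _ _ _ => rfl), Finsupp.sum_single_index rfl]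
      at this
  obtain ⟨m, hm⟩ := (support_nonempty.mpr h)
  have hpos : 0 < p.totalDegree := lt_of_lt_of_le (Nat.succ_pos _) (key m hm)
  rw [totalDegree, Finset.sup_lt_iff (by exact hpos)]
  exact fun m hm => Nat.lt_of_succ_le (key m hm)

/-- Let `k` be a field of characteristic zero, `L` a finitely generated
field extension of `k`, and `x₁, …, xₙ ∈ L` elements whose differentials
`d x₁, …, d xₙ` form an `L`-basis of `Ω_{L/k}`.  Then `x₁, …, xₙ` are algebraically
independent over `k` and `k(x₁, …, xₙ) ⊆ L` is a finite extension. -/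
theorem algebraicIndependent_and_finite_of_differentials_basis
    (k L : Type*) [Field k] [CharZero k] [Field L] [Algebra k L]
    (hfg : (⊤ : IntermediateField k L).FG)
    (n : ℕ) (x : Fin n → L)
    (b : Module.Basis (Fin n) L (Ω[L⁄k]))
    (hb : ∀ i, b i = KaehlerDifferential.D k L (x i)) :
    AlgebraicIndependent k x ∧
      FiniteDimensional (↥(IntermediateField.adjoin k (Set.range x))) L := by
  classical
  -- Part 1: algebraic independence
  have key : ∀ d : ℕ, ∀ p : MvPolynomial (Fin n) k, p.totalDegree ≤ d →
      aeval x p = 0 → p = 0 := by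
    intro d
    induction d using Nat.strong_induction_on with
    | _ d IH =>
      intro p hdeg hp
      have hD := deriv_aeval_eq (KaehlerDifferential.D k L) x p
      rw [hp, map_zero] at hD
      have hcoef : ∀ i, aeval x (pderiv i p) = 0 := by
        have hli := Fintype.linearIndependent_iff.mp b.linearIndependent
        have hsum : ∑ i, aeval x (pderiv i p) • b i = 0 := by
          simp only [hb]
          exact hD.symm
        exact hli _ hsum
      have hz : ∀ i, pderiv i p = 0 := by
        intro i
        by_contra hne
        have hlt := totalDegree_pderiv_lt i hne
        exact hne (IH (pderiv i p).totalDegree (lt_of_lt_of_le hlt hdeg) _ le_rfl (hcoef i))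
      have hC := eq_C_of_pderiv_eq_zero hz
      rw [hC] at hp ⊢
      rw [aeval_C] at hp
      have : constantCoeff p = 0 := (algebraMap k L).injective (by simpa using hp)
      rw [this, map_zero]
  have halg : AlgebraicIndependent k x := by
    rw [algebraicIndependent_iff]
    intro p hp
    exact key p.totalDegree p le_rfl hp
  refine ⟨halg, ?_⟩
  set K := IntermediateField.adjoin k (Set.range x) with hK
  -- essential finiteness
  haveI hEss : Algebra.EssFiniteType k L := by
    rw [Algebra.essFiniteType_iff]
    obtain ⟨s, hs⟩ := hfg
    refine ⟨s, fun y => ?_⟩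
    have hy : y ∈ IntermediateField.adjoin k (s : Set L) := hs ▸ trivial
    rw [IntermediateField.mem_adjoin_iff] at hy
    obtain ⟨r, q, hrq⟩ := hy
    have hmem : ∀ pq : MvPolynomial (↑(s : Set L)) k,
        aeval (Subtype.val) pq ∈ Algebra.adjoin k (s : Set L) := by
      intro pq
      have h1 := Algebra.adjoin_range_eq_range_aeval k (Subtype.val : ((s : Set L)) → L)
      rw [Subtype.range_coe] at h1
      rw [h1]
      exact ⟨pq, rfl⟩
    by_cases hy0 : y = 0
    · exact ⟨1, one_mem _, isUnit_one, by rw [hy0, zero_mul]; exact zero_mem _⟩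
    · have hq : aeval (Subtype.val) q ≠ 0 := by
        intro h0; rw [h0, div_zero] at hrq; exact hy0 hrq
      exact ⟨aeval Subtype.val q, hmem q, isUnit_iff_ne_zero.mpr hq,
        by rw [hrq, div_mul_cancel₀ _ hq]; exact hmem r⟩
  haveI : Algebra.EssFiniteType K L := Algebra.EssFiniteType.of_comp k K L
  haveI : Algebra.FormallyUnramified K L := by
    constructor
    have hf0 : KaehlerDifferential.map k K L L = 0 := by
      refine b.ext fun i => ?_
      rw [hb i, KaehlerDifferential.map_D]
      have hxK : x i ∈ K := IntermediateField.subset_adjoin k _ ⟨i, rfl⟩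
      have hx : (algebraMap L L) (x i) = algebraMap K L ⟨x i, hxK⟩ := by
        simp only [Algebra.algebraMap_self, RingHom.id_apply]
        rfl
      rw [hx, Derivation.map_algebraMap, LinearMap.zero_apply]
    have hsurj := KaehlerDifferential.map_surjective k K L
    constructor
    intro a c
    obtain ⟨a', rfl⟩ := hsurj a
    obtain ⟨c', rfl⟩ := hsurj c
    rw [hf0, LinearMap.zero_apply, LinearMap.zero_apply]
  exact Algebra.FormallyUnramified.finite_of_free (R := K) (S := L)
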